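/- arXiv:1709.03922 — 4 statements merged into one kernel-verified Lean document; each statement's English description precedes it below -/
import Mathlib

section
/- Let 0 < γ < 1 and let R ≥ 0, Q ≥ 0 be real numbers with R + Q > 0. Then there exists a unique real number Z > 0 such that Z^γ − R·Z^{γ−1} = Q; moreover this Z satisfies Z ≥ R. -/
open Real

private lemma bifluid_key (γ R Z : ℝ) (hZ : 0 < Z) :
    Z ^ γ - R * Z ^ (γ - 1) = Z ^ (γ - 1) * (Z - R) := by
  rw [Real.rpow_sub hZ, Real.rpow_one]
  field_simp

private lemma bifluid_mono (γ R : ℝ) (hγ0 : 0 < γ) (hγ1 : γ < 1) (hR : 0 ≤ R)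
    {a b : ℝ} (ha : 0 < a) (hab : a < b) :
    a ^ γ - R * a ^ (γ - 1) < b ^ γ - R * b ^ (γ - 1) := by
  have h1 : a ^ γ < b ^ γ := Real.rpow_lt_rpow ha.le hab hγ0
  have h2 : b ^ (γ - 1) ≤ a ^ (γ - 1) :=
    Real.rpow_le_rpow_of_nonpos ha hab.le (by linarith)
  have h3 : R * b ^ (γ - 1) ≤ R * a ^ (γ - 1) := mul_le_mul_of_nonneg_left h2 hR
  linarith

private lemma bifluid_exists (γ R Q : ℝ) (hγ0 : 0 < γ) (hγ1 : γ < 1)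
    (hR : 0 ≤ R) (hQ : 0 ≤ Q) (hRQ : 0 < R + Q) :
    ∃ Z : ℝ, 0 < Z ∧ Z ^ γ - R * Z ^ (γ - 1) = Q := by
  rcases eq_or_lt_of_le hR with hR0 | hRpos
  · -- R = 0
    have hQpos : 0 < Q := by linarith [hRQ]
    refine ⟨Q ^ (1 / γ), Real.rpow_pos_of_pos hQpos _, ?_⟩
    rw [← hR0, ← Real.rpow_mul hQpos.le, one_div_mul_cancel (ne_of_gt hγ0), Real.rpow_one]
    ring
  · -- R > 0 : IVT on [R, b]
    set b : ℝ := R + max 1 ((Q + R) ^ (1 / γ)) with hb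
    have hb1 : 1 ≤ b := by
      have := le_max_left 1 ((Q + R) ^ (1 / γ)); rw [hb]; linarith
    have hbpos : 0 < b := by linarith
    have hRb : R ≤ b := by
      have := le_max_left 1 ((Q + R) ^ (1 / γ)); rw [hb]; linarith
    have hbγ : Q + R ≤ b ^ γ := by
      have h1 : (Q + R) ^ (1 / γ) ≤ b := by
        have := le_max_right 1 ((Q + R) ^ (1 / γ)); rw [hb]; linarith
      have h2 : ((Q + R) ^ (1 / γ)) ^ γ ≤ b ^ γ :=
        Real.rpow_le_rpow (Real.rpow_nonneg (by linarith) _) h1 hγ0.le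
      rwa [← Real.rpow_mul (by linarith : (0:ℝ) ≤ Q + R),
        one_div_mul_cancel (ne_of_gt hγ0), Real.rpow_one] at h2
    have hbexp : b ^ (γ - 1) ≤ 1 :=
      Real.rpow_le_one_of_one_le_of_nonpos hb1 (by linarith)
    have hfb : Q ≤ b ^ γ - R * b ^ (γ - 1) := by
      have : R * b ^ (γ - 1) ≤ R * 1 := mul_le_mul_of_nonneg_left hbexp hR
      linarith
    have hfR : R ^ γ - R * R ^ (γ - 1) = 0 := by
      rw [bifluid_key γ R R hRpos]; ring
    have hcont : ContinuousOn (fun z : ℝ => z ^ γ - R * z ^ (γ - 1)) (Set.Icc R b) := by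
      apply ContinuousOn.sub
      · exact continuousOn_id.rpow_const fun x hx => Or.inl (ne_of_gt (lt_of_lt_of_le hRpos hx.1))
      · exact continuousOn_const.mul
          (continuousOn_id.rpow_const fun x hx => Or.inl (ne_of_gt (lt_of_lt_of_le hRpos hx.1)))
    have hmem : Q ∈ Set.Icc (R ^ γ - R * R ^ (γ - 1)) (b ^ γ - R * b ^ (γ - 1)) := by
      constructor
      · rw [hfR]; exact hQ
      · exact hfb
    obtain ⟨Z, hZmem, hZeq⟩ := intermediate_value_Icc hRb hcont hmem
    exact ⟨Z, lt_of_lt_of_le hRpos hZmem.1, hZeq⟩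

theorem bifluid_pressure_closure_exists_unique
    (γ R Q : ℝ) (hγ0 : 0 < γ) (hγ1 : γ < 1)
    (hR : 0 ≤ R) (hQ : 0 ≤ Q) (hRQ : 0 < R + Q) :
    (∃! Z : ℝ, 0 < Z ∧ Z ^ γ - R * Z ^ (γ - 1) = Q) ∧
    (∀ Z : ℝ, 0 < Z → Z ^ γ - R * Z ^ (γ - 1) = Q → R ≤ Z) := by
  obtain ⟨Z0, hZ0pos, hZ0eq⟩ := bifluid_exists γ R Q hγ0 hγ1 hR hQ hRQ
  constructor
  · refine ⟨Z0, ⟨hZ0pos, hZ0eq⟩, ?_⟩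
    rintro y ⟨hypos, hyeq⟩
    by_contra hne
    rcases lt_or_gt_of_ne hne with h | h
    · have := bifluid_mono γ R hγ0 hγ1 hR hypos h
      rw [hyeq, hZ0eq] at this; exact lt_irrefl Q this
    · have := bifluid_mono γ R hγ0 hγ1 hR hZ0pos h
      rw [hyeq, hZ0eq] at this; exact lt_irrefl Q this
  · intro Z hZpos hZeq
    have hkey := bifluid_key γ R Z hZpos
    rw [hZeq] at hkey
    have hpow : 0 < Z ^ (γ - 1) := Real.rpow_pos_of_pos hZpos _
    nlinarith [hQ, hpow]
end

section
/- Let 0 < γ < 1. Suppose R₁, R₂, Q₁, Q₂ ≥ 0 with R₁ + Q₁ > 0 and R₂ + Q₂ > 0, and suppose R₁ ≤ R₂ and Q₁ ≤ Q₂. If Z₁ and Z₂ are the corresponding values Z(R₁,Q₁) and Z(R₂,Q₂), then Z₁ ≤ Z₂. -/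
open Real

lemma bifluid_aux_strictMono (γ R : ℝ) (hγ0 : 0 < γ) (hγ1 : γ < 1) (hR : 0 ≤ R) :
    StrictMonoOn (fun x : ℝ => x ^ γ - R * x ^ (γ - 1)) (Set.Ioi 0) := by
  apply strictMonoOn_of_deriv_pos (convex_Ioi 0)
  · apply ContinuousOn.sub
    · intro x hx
      exact (Real.continuousAt_rpow_const x γ (Or.inl (ne_of_gt hx))).continuousWithinAt
    · apply ContinuousOn.mul continuousOn_const
      intro x hx
      exact (Real.continuousAt_rpow_const x (γ - 1) (Or.inl (ne_of_gt hx))).continuousWithinAt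
  · intro x hx
    rw [interior_Ioi] at hx
    have hx0 : (0:ℝ) < x := hx
    have h1 : HasDerivAt (fun x : ℝ => x ^ γ) (γ * x ^ (γ - 1)) x :=
      Real.hasDerivAt_rpow_const (Or.inl hx0.ne')
    have h2 : HasDerivAt (fun x : ℝ => x ^ (γ - 1)) ((γ - 1) * x ^ (γ - 1 - 1)) x :=
      Real.hasDerivAt_rpow_const (Or.inl hx0.ne')
    have h : HasDerivAt (fun x : ℝ => x ^ γ - R * x ^ (γ - 1))
        (γ * x ^ (γ - 1) - R * ((γ - 1) * x ^ (γ - 1 - 1))) x := h1.sub (h2.const_mul R)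
    rw [h.deriv]
    have ha : 0 < γ * x ^ (γ - 1) := by positivity
    have hb : R * ((γ - 1) * x ^ (γ - 1 - 1)) ≤ 0 := by
      apply mul_nonpos_of_nonneg_of_nonpos hR
      apply mul_nonpos_of_nonpos_of_nonneg (by linarith)
      positivity
    linarith

theorem bifluid_Z_monotone
    (γ : ℝ) (hγ0 : 0 < γ) (hγ1 : γ < 1)
    (R₁ R₂ Q₁ Q₂ Z₁ Z₂ : ℝ)
    (hR₁ : 0 ≤ R₁) (hR₂ : 0 ≤ R₂) (hQ₁ : 0 ≤ Q₁) (hQ₂ : 0 ≤ Q₂)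
    (hRQ₁ : 0 < R₁ + Q₁) (hRQ₂ : 0 < R₂ + Q₂)
    (hRR : R₁ ≤ R₂) (hQQ : Q₁ ≤ Q₂)
    (hZ₁pos : 0 < Z₁) (hZ₁ : Z₁ ^ γ - R₁ * Z₁ ^ (γ - 1) = Q₁)
    (hZ₂pos : 0 < Z₂) (hZ₂ : Z₂ ^ γ - R₂ * Z₂ ^ (γ - 1) = Q₂) :
    Z₁ ≤ Z₂ := by
  by_contra h
  push_neg at h
  have hmono := bifluid_aux_strictMono γ R₂ hγ0 hγ1 hR₂ hZ₂pos hZ₁pos h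
  simp only at hmono
  have hle : Z₁ ^ γ - R₂ * Z₁ ^ (γ - 1) ≤ Z₁ ^ γ - R₁ * Z₁ ^ (γ - 1) := by
    have : R₁ * Z₁ ^ (γ - 1) ≤ R₂ * Z₁ ^ (γ - 1) :=
      mul_le_mul_of_nonneg_right hRR (Real.rpow_nonneg hZ₁pos.le _)
    linarith
  linarith
end

section
/- Let 0 < γ < 1, and let (R₀, Q₀) ∈ ℝ² with R₀ ≥ 0. Suppose Z : ℝ × ℝ → ℝ is continuous at (R₀, Q₀), that Z(R₀,Q₀) > 0, and that Z(R,Q)^γ − R·Z(R,Q)^{γ−1} = Q holds for all (R,Q) in some neighborhood of (R₀,Q₀) with Z(R,Q) > 0 there. Then Z is (Fréchet) differentiable at (R₀,Q₀), with partial derivatives ∂Z/∂R = Z₀^{γ−1} / (γ·Z₀^{γ−1} − (γ−1)·R₀·Z₀^{γ−2}) and ∂Z/∂Q = 1 / (γ·Z₀^{γ−1} − (γ−1)·R₀·Z₀^{γ−2}), where Z₀ = Z(R₀,Q₀). -/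
open Real

theorem bifluid_Z_hasFDerivAt
    (γ : ℝ) (hγ0 : 0 < γ) (hγ1 : γ < 1)
    (R₀ Q₀ : ℝ) (hR₀ : 0 ≤ R₀)
    (Z : ℝ × ℝ → ℝ)
    (hcont : ContinuousAt Z (R₀, Q₀))
    (hZ₀pos : 0 < Z (R₀, Q₀))
    (hrel : ∀ᶠ p : ℝ × ℝ in nhds (R₀, Q₀),
      0 < Z p ∧ (Z p) ^ γ - p.1 * (Z p) ^ (γ - 1) = p.2) :
    HasFDerivAt Z
      (((Z (R₀, Q₀)) ^ (γ - 1) /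
          (γ * (Z (R₀, Q₀)) ^ (γ - 1) - (γ - 1) * R₀ * (Z (R₀, Q₀)) ^ (γ - 2))) •
            ContinuousLinearMap.fst ℝ ℝ ℝ +
        (1 / (γ * (Z (R₀, Q₀)) ^ (γ - 1) - (γ - 1) * R₀ * (Z (R₀, Q₀)) ^ (γ - 2))) •
            ContinuousLinearMap.snd ℝ ℝ ℝ)
      (R₀, Q₀) := by
  set Z₀ := Z (R₀, Q₀) with hZ₀def
  have hZne : Z₀ ≠ 0 := hZ₀pos.ne'
  set c : ℝ := Z₀ ^ (γ - 1) with hc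
  set D : ℝ := γ * Z₀ ^ (γ - 1) - (γ - 1) * R₀ * Z₀ ^ (γ - 2) with hD
  have h12 : Z₀ ^ (γ - 1) = Z₀ ^ (γ - 2) * Z₀ := by
    rw [← Real.rpow_add_one hZne]; ring_nf
  have h2pos : (0:ℝ) < Z₀ ^ (γ - 2) := Real.rpow_pos_of_pos hZ₀pos _
  have hDpos : 0 < D := by
    rw [hD, h12]
    nlinarith [mul_pos (mul_pos hγ0 hZ₀pos) h2pos,
      mul_nonneg (mul_nonneg (sub_nonneg.2 hγ1.le) hR₀) h2pos.le]
  have hDne : D ≠ 0 := hDpos.ne'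
  set fst := ContinuousLinearMap.fst ℝ ℝ ℝ with hfst
  set snd := ContinuousLinearMap.snd ℝ ℝ ℝ with hsnd
  set A : ℝ × ℝ →L[ℝ] ℝ × ℝ := fst.prod ((-c) • fst + D • snd) with hA
  set B : ℝ × ℝ →L[ℝ] ℝ × ℝ := fst.prod ((c / D) • fst + (1 / D) • snd) with hB
  have hAB : Function.LeftInverse B A := by
    intro x
    refine Prod.ext ?_ ?_ <;>
      simp [hA, hB, hfst, hsnd, ContinuousLinearMap.prod_apply]
    field_simp
    ring
  have hBA : Function.RightInverse B A := by
    intro x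
    refine Prod.ext ?_ ?_ <;>
      simp [hA, hB, hfst, hsnd, ContinuousLinearMap.prod_apply]
    field_simp
    ring
  set e : (ℝ × ℝ) ≃L[ℝ] (ℝ × ℝ) := ContinuousLinearEquiv.equivOfInverse A B hAB hBA with he
  set f : ℝ × ℝ → ℝ × ℝ := fun q => (q.1, q.2 ^ γ - q.1 * q.2 ^ (γ - 1)) with hf_def
  have hstrict : HasStrictFDerivAt f (e : ℝ × ℝ →L[ℝ] ℝ × ℝ) (R₀, Z₀) := by
    have h1 : HasStrictFDerivAt (fun q : ℝ × ℝ => q.2 ^ γ)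
        ((γ * Z₀ ^ (γ - 1)) • snd) (R₀, Z₀) := by
      have := (Real.hasStrictDerivAt_rpow_const (x := Z₀) (p := γ)
        (Or.inl hZne)).comp_hasStrictFDerivAt (x := ((R₀, Z₀) : ℝ × ℝ)) (snd.hasStrictFDerivAt)
      exact this
    have h2 : HasStrictFDerivAt (fun q : ℝ × ℝ => q.2 ^ (γ - 1))
        (((γ - 1) * Z₀ ^ (γ - 2)) • snd) (R₀, Z₀) := by
      have := (Real.hasStrictDerivAt_rpow_const (x := Z₀) (p := γ - 1)
        (Or.inl hZne)).comp_hasStrictFDerivAt (x := ((R₀, Z₀) : ℝ × ℝ)) (snd.hasStrictFDerivAt)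
      rw [show γ - 2 = γ - 1 - 1 by ring]
      exact this
    have h3 : HasStrictFDerivAt (fun q : ℝ × ℝ => q.1 * q.2 ^ (γ - 1))
        (R₀ • (((γ - 1) * Z₀ ^ (γ - 2)) • snd) + Z₀ ^ (γ - 1) • fst) (R₀, Z₀) :=
      hasStrictFDerivAt_fst.mul h2
    have key := HasStrictFDerivAt.prodMk hasStrictFDerivAt_fst (h1.sub h3)
    have heq : fst.prod ((γ * Z₀ ^ (γ - 1)) • snd -
        (R₀ • (((γ - 1) * Z₀ ^ (γ - 2)) • snd) + Z₀ ^ (γ - 1) • fst))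
        = (e : ℝ × ℝ →L[ℝ] ℝ × ℝ) := by
      refine ContinuousLinearMap.ext fun x => ?_
      refine Prod.ext ?_ ?_ <;>
        simp [he, hA, hfst, hsnd, ContinuousLinearMap.prod_apply, hc, hD]
      ring
    rw [heq] at key
    exact key
  have hQ : f (R₀, Z₀) = (R₀, Q₀) := by
    have := hrel.self_of_nhds
    exact Prod.ext rfl this.2
  set g := hstrict.localInverse f _ (R₀, Z₀) with hg_def
  have hg : HasFDerivAt g (e.symm : ℝ × ℝ →L[ℝ] ℝ × ℝ) (R₀, Q₀) := by
    have := hstrict.to_localInverse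
    rw [hQ] at this
    exact this.hasFDerivAt
  have hmap : ContinuousAt (fun p : ℝ × ℝ => ((p.1, Z p) : ℝ × ℝ)) (R₀, Q₀) :=
    continuousAt_fst.prodMk hcont
  have hev : ∀ᶠ p : ℝ × ℝ in nhds (R₀, Q₀), g (f (p.1, Z p)) = (p.1, Z p) := by
    have h1 : ∀ᶠ x in nhds ((R₀, Z₀) : ℝ × ℝ), g (f x) = x :=
      hstrict.eventually_left_inverse
    exact hmap.eventually h1
  have hfp : ∀ᶠ p : ℝ × ℝ in nhds (R₀, Q₀), f (p.1, Z p) = p := by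
    filter_upwards [hrel] with p hp
    exact Prod.ext rfl hp.2
  have hZg : Z =ᶠ[nhds (R₀, Q₀)] fun p => (g p).2 := by
    filter_upwards [hev, hfp] with p h1 h2
    rw [h2] at h1
    rw [h1]
  have hZder : HasFDerivAt (fun p => (g p).2)
      (snd.comp (e.symm : ℝ × ℝ →L[ℝ] ℝ × ℝ)) (R₀, Q₀) :=
    snd.hasFDerivAt.comp _ hg
  have hfinal : snd.comp (e.symm : ℝ × ℝ →L[ℝ] ℝ × ℝ)
      = (c / D) • fst + (1 / D) • snd := by
    refine ContinuousLinearMap.ext fun x => ?_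
    simp [he, ContinuousLinearEquiv.symm_equivOfInverse, hB, hfst, hsnd,
      ContinuousLinearMap.prod_apply]
  rw [hfinal] at hZder
  exact hZder.congr_of_eventuallyEq hZg
end

section
/- Let 0 < γ < 1 and k ≥ 1. For i = 1, 2 let Rᵢ, Qᵢ ≥ 0 with Rᵢ + Qᵢ > 0, and let Zᵢ = Z(Rᵢ,Qᵢ). Then |min(Z₁, k) − min(Z₂, k)| ≤ (1/γ)·|R₁ − R₂| + (k^{1−γ}/γ)·|Q₁ − Q₂|. -/
open Real

lemma bifluid_core (γ R₁ R₂ Q₁ Q₂ Z₁ Z₂ : ℝ) (hγ0 : 0 < γ) (hγ1 : γ < 1)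
    (hR₂ : 0 ≤ R₂) (hQ₂ : 0 ≤ Q₂)
    (hZ₁pos : 0 < Z₁) (hZ₂pos : 0 < Z₂) (hle : Z₂ ≤ Z₁)
    (h₁ : Z₁ = R₁ + Q₁ * Z₁ ^ (1 - γ)) (h₂ : Z₂ = R₂ + Q₂ * Z₂ ^ (1 - γ)) :
    γ * (Z₁ - Z₂) ≤ (R₁ - R₂) + (Q₁ - Q₂) * Z₁ ^ (1 - γ) := by
  have hp0 : (0:ℝ) ≤ 1 - γ := by linarith
  have hs0 : 0 ≤ (Z₁ - Z₂) / Z₂ := div_nonneg (by linarith) hZ₂pos.le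
  have hs : -1 ≤ (Z₁ - Z₂) / Z₂ := by linarith
  have hbern := rpow_one_add_le_one_add_mul_self hs hp0 (by linarith : (1:ℝ) - γ ≤ 1)
  have h1s : 1 + (Z₁ - Z₂) / Z₂ = Z₁ / Z₂ := by field_simp; ring
  rw [h1s, Real.div_rpow hZ₁pos.le hZ₂pos.le] at hbern
  have hZ₂p : (0:ℝ) < Z₂ ^ (1 - γ) := Real.rpow_pos_of_pos hZ₂pos _
  -- multiply through by Z₂^(1-γ)
  have hconc : Z₁ ^ (1 - γ) ≤ Z₂ ^ (1 - γ) + (1 - γ) * (Z₁ - Z₂) * (Z₂ ^ (1 - γ) / Z₂) := by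
    have := mul_le_mul_of_nonneg_right hbern hZ₂p.le
    rw [div_mul_cancel₀ _ (ne_of_gt hZ₂p)] at this
    calc Z₁ ^ (1 - γ) ≤ (1 + (1 - γ) * ((Z₁ - Z₂) / Z₂)) * Z₂ ^ (1 - γ) := this
      _ = Z₂ ^ (1 - γ) + (1 - γ) * (Z₁ - Z₂) * (Z₂ ^ (1 - γ) / Z₂) := by
          field_simp
  -- Q₂ * Z₂^(1-γ) = Z₂ - R₂, so Q₂ * Z₂^(1-γ) / Z₂ ≤ 1
  have hQZ : Q₂ * Z₂ ^ (1 - γ) = Z₂ - R₂ := by linarith [h₂]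
  have hfrac : Q₂ * (Z₂ ^ (1 - γ) / Z₂) ≤ 1 := by
    rw [mul_div_assoc'] at *
    rw [hQZ]
    rw [div_le_one hZ₂pos]
    linarith
  have h3 : Q₂ * (Z₁ ^ (1 - γ) - Z₂ ^ (1 - γ)) ≤ (1 - γ) * (Z₁ - Z₂) := by
    have step1 : Q₂ * (Z₁ ^ (1 - γ) - Z₂ ^ (1 - γ))
        ≤ Q₂ * ((1 - γ) * (Z₁ - Z₂) * (Z₂ ^ (1 - γ) / Z₂)) := by
      apply mul_le_mul_of_nonneg_left _ hQ₂
      linarith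
    have step2 : Q₂ * ((1 - γ) * (Z₁ - Z₂) * (Z₂ ^ (1 - γ) / Z₂))
        = ((1 - γ) * (Z₁ - Z₂)) * (Q₂ * (Z₂ ^ (1 - γ) / Z₂)) := by ring
    have h1γ : 0 ≤ (1 - γ) * (Z₁ - Z₂) := by
      apply mul_nonneg hp0; linarith
    calc Q₂ * (Z₁ ^ (1 - γ) - Z₂ ^ (1 - γ))
        ≤ ((1 - γ) * (Z₁ - Z₂)) * (Q₂ * (Z₂ ^ (1 - γ) / Z₂)) := by rw [← step2]; exact step1
      _ ≤ ((1 - γ) * (Z₁ - Z₂)) * 1 := mul_le_mul_of_nonneg_left hfrac h1γ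
      _ = (1 - γ) * (Z₁ - Z₂) := by ring
  have key : Z₁ - Z₂ = (R₁ - R₂) + (Q₁ - Q₂) * Z₁ ^ (1 - γ)
      + Q₂ * (Z₁ ^ (1 - γ) - Z₂ ^ (1 - γ)) := by linear_combination h₁ - h₂
  linarith

/-- Convert the original equation into fixed-point form. -/
lemma bifluid_fixed (γ R Q Z : ℝ) (hZpos : 0 < Z) (h : Z ^ γ - R * Z ^ (γ - 1) = Q) :
    Z = R + Q * Z ^ (1 - γ) := by
  have h1 : Z ^ γ * Z ^ (1 - γ) = Z := by
    rw [← Real.rpow_add hZpos]; norm_num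
  have h2 : Z ^ (γ - 1) * Z ^ (1 - γ) = 1 := by
    rw [← Real.rpow_add hZpos]; norm_num
  have := congrArg (· * Z ^ (1 - γ)) h
  simp only [sub_mul] at this
  linear_combination this - h1 + R * h2

/-- One-sided estimate. -/
lemma bifluid_one_sided
    (γ k : ℝ) (hγ0 : 0 < γ) (hγ1 : γ < 1) (hk : 1 ≤ k)
    (R₁ R₂ Q₁ Q₂ Z₁ Z₂ : ℝ)
    (hR₁ : 0 ≤ R₁) (hR₂ : 0 ≤ R₂) (hQ₁ : 0 ≤ Q₁) (hQ₂ : 0 ≤ Q₂)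
    (hZ₁pos : 0 < Z₁) (hZ₁ : Z₁ ^ γ - R₁ * Z₁ ^ (γ - 1) = Q₁)
    (hZ₂pos : 0 < Z₂) (hZ₂ : Z₂ ^ γ - R₂ * Z₂ ^ (γ - 1) = Q₂) :
    min Z₁ k - min Z₂ k ≤
      (1 / γ) * |R₁ - R₂| + (k ^ (1 - γ) / γ) * |Q₁ - Q₂| := by
  have hkpos : (0:ℝ) < k := by linarith
  have hkp : (0:ℝ) < k ^ (1 - γ) := Real.rpow_pos_of_pos hkpos _
  have hRHS : 0 ≤ (1 / γ) * |R₁ - R₂| + (k ^ (1 - γ) / γ) * |Q₁ - Q₂| := by positivity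
  have hf₁ := bifluid_fixed γ R₁ Q₁ Z₁ hZ₁pos hZ₁
  have hf₂ := bifluid_fixed γ R₂ Q₂ Z₂ hZ₂pos hZ₂
  rcases le_or_gt Z₁ Z₂ with hle | hlt
  · have : min Z₁ k ≤ min Z₂ k := min_le_min hle le_rfl
    linarith
  rcases le_or_gt k Z₂ with hkZ₂ | hZ₂k
  · rw [min_eq_right (le_trans hkZ₂ hlt.le), min_eq_right hkZ₂]
    simpa using hRHS
  rw [min_eq_left hZ₂k.le]
  rcases le_or_gt Z₁ k with hZ₁k | hkZ₁
  · rw [min_eq_left hZ₁k]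
    have hcore := bifluid_core γ R₁ R₂ Q₁ Q₂ Z₁ Z₂ hγ0 hγ1 hR₂ hQ₂ hZ₁pos hZ₂pos hlt.le hf₁ hf₂
    have hZ₁p : Z₁ ^ (1 - γ) ≤ k ^ (1 - γ) :=
      Real.rpow_le_rpow hZ₁pos.le hZ₁k (by linarith)
    have habs1 : R₁ - R₂ ≤ |R₁ - R₂| := le_abs_self _
    have habs2 : (Q₁ - Q₂) * Z₁ ^ (1 - γ) ≤ |Q₁ - Q₂| * k ^ (1 - γ) := by
      rcases le_or_gt Q₁ Q₂ with h | h
      · have : (Q₁ - Q₂) * Z₁ ^ (1 - γ) ≤ 0 :=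
          mul_nonpos_of_nonpos_of_nonneg (by linarith) (Real.rpow_pos_of_pos hZ₁pos _).le
        have : (0:ℝ) ≤ |Q₁ - Q₂| * k ^ (1 - γ) := by positivity
        linarith [mul_nonpos_of_nonpos_of_nonneg (show Q₁ - Q₂ ≤ 0 by linarith)
          (Real.rpow_pos_of_pos hZ₁pos (1-γ)).le]
      · calc (Q₁ - Q₂) * Z₁ ^ (1 - γ) ≤ (Q₁ - Q₂) * k ^ (1 - γ) :=
              mul_le_mul_of_nonneg_left hZ₁p (by linarith)
          _ ≤ |Q₁ - Q₂| * k ^ (1 - γ) :=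
              mul_le_mul_of_nonneg_right (le_abs_self _) hkp.le
    have : γ * (Z₁ - Z₂) ≤ |R₁ - R₂| + |Q₁ - Q₂| * k ^ (1 - γ) := by linarith
    rw [div_mul_eq_mul_div, div_mul_eq_mul_div, ← add_div, le_div_iff₀ hγ0]
    nlinarith
  · -- k < Z₁ : min Z₁ k = k
    rw [min_eq_right hkZ₁.le]
    rcases le_or_gt R₁ k with hR₁k | hkR₁
    · -- use auxiliary point: k = R₁ + Q' * k^(1-γ) with Q' = (k - R₁) * k^(γ-1)
      set Q' : ℝ := (k - R₁) * k ^ (γ - 1) with hQ'def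
      have hQ'0 : 0 ≤ Q' := by
        apply mul_nonneg (by linarith) (Real.rpow_pos_of_pos hkpos _).le
      have hkfix : k = R₁ + Q' * k ^ (1 - γ) := by
        have h2 : k ^ (γ - 1) * k ^ (1 - γ) = 1 := by
          rw [← Real.rpow_add hkpos]; norm_num
        have : Q' * k ^ (1 - γ) = (k - R₁) * (k ^ (γ - 1) * k ^ (1 - γ)) := by
          rw [hQ'def]; ring
        rw [this, h2]; ring
      -- Q' ≤ Q₁ via core lemma applied to (R₁,Q₁,Z₁) vs (R₁,Q',k)
      have hQ'le : Q' ≤ Q₁ := by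
        have hcore := bifluid_core γ R₁ R₁ Q₁ Q' Z₁ k hγ0 hγ1 hR₁ hQ'0
          hZ₁pos hkpos hkZ₁.le hf₁ hkfix
        have hZp : (0:ℝ) < Z₁ ^ (1 - γ) := Real.rpow_pos_of_pos hZ₁pos _
        nlinarith
      have hcore := bifluid_core γ R₁ R₂ Q' Q₂ k Z₂ hγ0 hγ1 hR₂ hQ₂
        hkpos hZ₂pos hZ₂k.le hkfix hf₂
      have habs1 : R₁ - R₂ ≤ |R₁ - R₂| := le_abs_self _
      have habs2 : (Q' - Q₂) * k ^ (1 - γ) ≤ |Q₁ - Q₂| * k ^ (1 - γ) := by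
        rcases le_or_gt Q' Q₂ with h | h
        · have h1 : (Q' - Q₂) * k ^ (1 - γ) ≤ 0 :=
            mul_nonpos_of_nonpos_of_nonneg (by linarith) hkp.le
          have h2 : (0:ℝ) ≤ |Q₁ - Q₂| * k ^ (1 - γ) := by positivity
          linarith
        · have : Q' - Q₂ ≤ |Q₁ - Q₂| := by
            have : Q₁ - Q₂ ≤ |Q₁ - Q₂| := le_abs_self _
            linarith
          exact mul_le_mul_of_nonneg_right this hkp.le
      have : γ * (k - Z₂) ≤ |R₁ - R₂| + |Q₁ - Q₂| * k ^ (1 - γ) := by linarith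
      rw [div_mul_eq_mul_div, div_mul_eq_mul_div, ← add_div, le_div_iff₀ hγ0]
      nlinarith
    · -- k < R₁: then R₂ ≤ Z₂ < k < R₁
      have hR₂Z₂ : R₂ ≤ Z₂ := by
        have : 0 ≤ Q₂ * Z₂ ^ (1 - γ) :=
          mul_nonneg hQ₂ (Real.rpow_pos_of_pos hZ₂pos _).le
        linarith [hf₂]
      have h1 : k - Z₂ ≤ |R₁ - R₂| := by
        rw [abs_of_nonneg (by linarith : (0:ℝ) ≤ R₁ - R₂)]
        linarith
      have h2 : γ * (k - Z₂) ≤ k - Z₂ := by nlinarith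
      have h3 : (0:ℝ) ≤ (k ^ (1 - γ) / γ) * |Q₁ - Q₂| := by positivity
      have h4 : k - Z₂ ≤ 1 / γ * |R₁ - R₂| := by
        rw [one_div, inv_mul_eq_div, le_div_iff₀ hγ0]
        nlinarith
      linarith

theorem bifluid_truncated_Z_lipschitz
    (γ k : ℝ) (hγ0 : 0 < γ) (hγ1 : γ < 1) (hk : 1 ≤ k)
    (R₁ R₂ Q₁ Q₂ Z₁ Z₂ : ℝ)
    (hR₁ : 0 ≤ R₁) (hR₂ : 0 ≤ R₂) (hQ₁ : 0 ≤ Q₁) (hQ₂ : 0 ≤ Q₂)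
    (hRQ₁ : 0 < R₁ + Q₁) (hRQ₂ : 0 < R₂ + Q₂)
    (hZ₁pos : 0 < Z₁) (hZ₁ : Z₁ ^ γ - R₁ * Z₁ ^ (γ - 1) = Q₁)
    (hZ₂pos : 0 < Z₂) (hZ₂ : Z₂ ^ γ - R₂ * Z₂ ^ (γ - 1) = Q₂) :
    |min Z₁ k - min Z₂ k| ≤
      (1 / γ) * |R₁ - R₂| + (k ^ (1 - γ) / γ) * |Q₁ - Q₂| := by
  rw [abs_sub_le_iff]
  constructor
  · exact bifluid_one_sided γ k hγ0 hγ1 hk R₁ R₂ Q₁ Q₂ Z₁ Z₂ hR₁ hR₂ hQ₁ hQ₂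
      hZ₁pos hZ₁ hZ₂pos hZ₂
  · have := bifluid_one_sided γ k hγ0 hγ1 hk R₂ R₁ Q₂ Q₁ Z₂ Z₁ hR₂ hR₁ hQ₂ hQ₁
      hZ₂pos hZ₂ hZ₁pos hZ₁
    rwa [abs_sub_comm R₂ R₁, abs_sub_comm Q₂ Q₁] at this
end
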